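/- Let P be a finite nonempty set of points in ℝ² and let r ∈ ℝ² be a point with r ∉ convexHull(P). Then there exist a point p ∈ P and a closed halfplane H such that P ⊆ H and both r and p lie on the boundary line of H. -/

import Mathlib

open Classical

noncomputable section

/-- Points in the plane. -/
abbrev Pt : Type := EuclideanSpace ℝ (Fin 2)

/-- The closed halfplane `{x : ⟪v, x⟫ ≤ c}`, bounded by the line `{x : ⟪v, x⟫ = c}`. -/
def halfplane (v : Pt) (c : ℝ) : Set Pt := {x | (inner ℝ v x : ℝ) ≤ c}

/-- For a point `r` outside the convex hull of a finite nonempty point set `P`,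
there is a point `p ∈ P` and a closed halfplane containing `P` whose boundary
line passes through both `r` and `p`. -/
theorem exists_tangent_halfplane (P : Finset Pt) (hP : P.Nonempty) (r : Pt)
    (hr : r ∉ convexHull ℝ (P : Set Pt)) :
    ∃ p ∈ P, ∃ (v : Pt) (c : ℝ), v ≠ 0 ∧ (P : Set Pt) ⊆ halfplane v c ∧
      (inner ℝ v r : ℝ) = c ∧ (inner ℝ v p : ℝ) = c := by
  obtain ⟨f, c', hfa, hfr⟩ := geometric_hahn_banach_closed_point
    (convex_convexHull ℝ _) ((P.finite_toSet.isCompact_convexHull ℝ).isClosed) hr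
  set v : Pt := (InnerProductSpace.toDual ℝ Pt).symm f with hvdef
  have hinner : ∀ x : Pt, (inner ℝ v x : ℝ) = f x := fun x =>
    InnerProductSpace.toDual_symm_apply
  have hP' : ∀ q ∈ P, (inner ℝ v q : ℝ) < c' := fun q hq => by
    rw [hinner]; exact hfa q (subset_convexHull ℝ _ hq)
  have hrc : c' < (inner ℝ v r : ℝ) := by rw [hinner]; exact hfr
  have ha : ∀ q ∈ P, (0:ℝ) < inner ℝ v r - inner ℝ v q := fun q hq => by
    have := hP' q hq; linarith
  have hv0 : v ≠ 0 := by
    intro h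
    obtain ⟨q, hq⟩ := hP
    have h1 := hP' q hq
    have h2 := hrc
    rw [h] at h1 h2
    simp [inner_zero_left] at h1 h2
    linarith
  set w : Pt := WithLp.toLp 2 (fun i => if i = 0 then -(v 1) else v 0) with hwdef
  have hw0 : w 0 = -(v 1) := rfl
  have hw1 : w 1 = v 0 := rfl
  have hvw : (inner ℝ v w : ℝ) = 0 := by
    simp [PiLp.inner_apply, Fin.sum_univ_two, hw0, hw1]
    ring
  have hww : (inner ℝ w w : ℝ) = (inner ℝ v v : ℝ) := by
    simp only [PiLp.inner_apply, Fin.sum_univ_two, hw0, hw1, RCLike.inner_apply, conj_trivial]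
    ring
  have hwwpos : (0:ℝ) < inner ℝ w w := by
    rw [hww]
    have hne : (inner ℝ v v : ℝ) ≠ 0 := fun h => hv0 (inner_self_eq_zero.mp h)
    exact lt_of_le_of_ne real_inner_self_nonneg (Ne.symm hne)
  set t : Pt → ℝ := fun q => ((inner ℝ w q : ℝ) - inner ℝ w r) / ((inner ℝ v r : ℝ) - inner ℝ v q)
    with htdef
  obtain ⟨p, hpP, hpmax⟩ := P.exists_max_image t hP
  set n : Pt := w + (t p) • v with hndef
  have hinn : ∀ x : Pt, (inner ℝ n x : ℝ) = inner ℝ w x + t p * inner ℝ v x := fun x => by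
    rw [hndef, inner_add_left, real_inner_smul_left]
  refine ⟨p, hpP, n, (inner ℝ n r : ℝ), ?_, ?_, rfl, ?_⟩
  · intro h
    have : (inner ℝ n w : ℝ) = 0 := by rw [h, inner_zero_left]
    rw [hinn w, hvw] at this
    linarith
  · intro q hq
    have hq' : q ∈ P := hq
    have haq := ha q hq'
    have htq : t q ≤ t p := hpmax q hq'
    have hb : (inner ℝ w q : ℝ) - inner ℝ w r ≤ t p * ((inner ℝ v r : ℝ) - inner ℝ v q) := by
      have := (div_le_iff₀ haq).mp htq
      linarith
    show (inner ℝ n q : ℝ) ≤ inner ℝ n r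
    rw [hinn q, hinn r]
    nlinarith
  · have hap := ha p hpP
    have : (inner ℝ w p : ℝ) - inner ℝ w r = t p * ((inner ℝ v r : ℝ) - inner ℝ v p) := by
      rw [htdef]
      exact (div_mul_cancel₀ _ hap.ne').symm
    rw [hinn p, hinn r]
    linarith
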